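/- For all sets A, B ⊆ ℕ: B is Turing reducible to A if and only if R(B) is cofinitely reducible to R(A). Hence the map S ↦ R(S) induces an embedding of the Turing degrees into the cofinite degrees. -/

import Mathlib

open Filter

/-- A finite record of oracle query answers: a finite list of (position, bit) pairs. -/
abbrev FinInfo : Type := List (ℕ × Bool)

/-- Two finite query-answer records are compatible if they agree wherever both answer. -/
def FinInfo.Compatible (σ τ : FinInfo) : Prop :=
  ∀ p ∈ σ, ∀ q ∈ τ, p.1 = q.1 → p.2 = q.2

/-- The answers recorded in `σ` are exactly those given by the characteristic
function of the set `C`. -/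
def AgreesSet (σ : FinInfo) (C : Set ℕ) : Prop :=
  ∀ p ∈ σ, (p.2 = true ↔ p.1 ∈ C)

/-- The answers recorded in `σ` are all given by the partial oracle `g`. -/
def AgreesPart (σ : FinInfo) (g : ℕ →. Bool) : Prop :=
  ∀ p ∈ σ, p.2 ∈ g p.1

/-- `g` is a partial oracle for the set `A`: a partial function from `ℕ` to `Bool`
agreeing with the characteristic function of `A` on its domain. -/
def IsPartialOracle (g : ℕ →. Bool) (A : Set ℕ) : Prop :=
  ∀ n b, b ∈ g n → (b = true ↔ n ∈ A)

/-- The domain of a partial oracle. -/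
def pDom (g : ℕ →. Bool) : Set ℕ := {n | (g n).Dom}

/-- A Turing functional (oracle Turing machine program), presented as a computable
enumeration of axioms `(σ, n, b)`, meaning: if the oracle answers the queries
recorded in `σ` as `σ` prescribes, then the machine halts on input `n` with
output `b`.  Oracle queries are made in parallel, so with a partial oracle the
machine halts on `n` iff some axiom for `n` is answered by the partial oracle.
Determinism of the machine is reflected in the requirement that axioms with
compatible query answers give equal outputs. -/
structure TuringFunctional where
  axs : ℕ → Option (FinInfo × ℕ × Bool)
  axs_computable : Computable axs
  consistent : ∀ k₁ k₂ σ₁ σ₂ n b₁ b₂, axs k₁ = some (σ₁, n, b₁) →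
    axs k₂ = some (σ₂, n, b₂) → σ₁.Compatible σ₂ → b₁ = b₂

namespace TuringFunctional

/-- `Φ^C(n)` halts with output `b` (total oracle `C`). -/
def HaltsT (Φ : TuringFunctional) (C : Set ℕ) (n : ℕ) (b : Bool) : Prop :=
  ∃ k σ, Φ.axs k = some (σ, n, b) ∧ AgreesSet σ C

/-- `Φ^g(n)` halts with output `b` (partial oracle `g`). -/
def HaltsP (Φ : TuringFunctional) (g : ℕ →. Bool) (n : ℕ) (b : Bool) : Prop :=
  ∃ k σ, Φ.axs k = some (σ, n, b) ∧ AgreesPart σ g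

/-- `Φ^C` is total. -/
def TotalOn (Φ : TuringFunctional) (C : Set ℕ) : Prop := ∀ n, ∃ b, Φ.HaltsT C n b

/-- The set `{n : Φ^C(n) = B(n)}` on which `Φ^C` halts and agrees with the
characteristic function of `B`. -/
def AgreeSet (Φ : TuringFunctional) (C B : Set ℕ) : Set ℕ :=
  {n | ∃ b, Φ.HaltsT C n b ∧ (b = true ↔ n ∈ B)}

/-- `Φ^A = B`: with oracle `A`, `Φ` is total and computes the characteristic
function of `B`. -/
def FunEq (Φ : TuringFunctional) (A B : Set ℕ) : Prop :=
  Φ.TotalOn A ∧ ∀ n b, Φ.HaltsT A n b → (b = true ↔ n ∈ B)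

/-- `Φ^g ≃ B`: every halting output of `Φ` with partial oracle `g` agrees with
the characteristic function of `B`. -/
def PAgrees (Φ : TuringFunctional) (g : ℕ →. Bool) (B : Set ℕ) : Prop :=
  ∀ n b, Φ.HaltsP g n b → (b = true ↔ n ∈ B)

/-- The domain of `Φ^g`. -/
def PDomain (Φ : TuringFunctional) (g : ℕ →. Bool) : Set ℕ :=
  {n | ∃ b, Φ.HaltsP g n b}

/-- The axiom with index `k` applies to oracle `C` on input `n`. -/
def AppliesAt (Φ : TuringFunctional) (C : Set ℕ) (n k : ℕ) : Prop :=
  ∃ σ b, Φ.axs k = some (σ, n, b) ∧ AgreesSet σ C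

/-- The (halting) computation of `Φ^C(n)` queries the oracle bit `C(m)`:
the first axiom in the enumeration that applies to `C` on input `n`
records an answer to a query at position `m`. -/
def QueriesAt (Φ : TuringFunctional) (C : Set ℕ) (n m : ℕ) : Prop :=
  ∃ k σ b, Φ.axs k = some (σ, n, b) ∧ AgreesSet σ C ∧
    (∀ k' < k, ¬ Φ.AppliesAt C n k') ∧ ∃ p ∈ σ, p.1 = m

end TuringFunctional

/-- `D ⊆ ℕ` has (asymptotic) density 1. -/
def DensityOne (D : Set ℕ) : Prop :=
  Filter.Tendsto (fun n : ℕ => ((D ∩ Set.Iio n).ncard : ℝ) / n) Filter.atTop (nhds 1)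

/-- `B ≤₁ A`: 1-reducibility. -/
def OneRed (B A : Set ℕ) : Prop :=
  ∃ f : ℕ → ℕ, Computable f ∧ Function.Injective f ∧ ∀ n, n ∈ B ↔ f n ∈ A

/-- `B ≤_T A`: Turing reducibility. -/
def TuringRed (B A : Set ℕ) : Prop :=
  ∃ Φ : TuringFunctional, Φ.FunEq A B

/-- `B ≤_mr A`: mod-recursive reducibility. -/
def ModRecRed (B A : Set ℕ) : Prop :=
  ∃ Φ : TuringFunctional, Φ.FunEq A B ∧
    ∀ C : Set ℕ, ComputablePred (fun n => (n ∈ C ↔ n ∈ A)) →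
      Φ.TotalOn C ∧ ComputablePred (fun n => n ∈ Φ.AgreeSet C B)

/-- `B ≤_mf A`: mod-finite reducibility. -/
def ModFinRed (B A : Set ℕ) : Prop :=
  ∃ Φ : TuringFunctional, Φ.FunEq A B ∧
    ∀ C : Set ℕ, {n | ¬ (n ∈ C ↔ n ∈ A)}.Finite →
      Φ.TotalOn C ∧ (Φ.AgreeSet C B)ᶜ.Finite

/-- `B ≤_cor A`: coarse reducibility. -/
def CoarseRed (B A : Set ℕ) : Prop :=
  ∃ Φ : TuringFunctional,
    ∀ C : Set ℕ, DensityOne {n | n ∈ C ↔ n ∈ A} →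
      Φ.TotalOn C ∧ DensityOne (Φ.AgreeSet C B)

/-- `B ≤_cf A`: cofinite reducibility. -/
def CofinRed (B A : Set ℕ) : Prop :=
  ∃ Φ : TuringFunctional, Φ.FunEq A B ∧
    ∀ g : ℕ →. Bool, IsPartialOracle g A → (pDom g)ᶜ.Finite →
      Φ.PAgrees g B ∧ (Φ.PDomain g)ᶜ.Finite

/-- `B ≤_g A`: generic reducibility. -/
def GenericRed (B A : Set ℕ) : Prop :=
  ∃ Φ : TuringFunctional, Φ.FunEq A B ∧
    ∀ g : ℕ →. Bool, IsPartialOracle g A → DensityOne (pDom g) →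
      Φ.PAgrees g B ∧ DensityOne (Φ.PDomain g)

/-- `B ≤_ii A`: infinite-information reducibility. -/
def IIRed (B A : Set ℕ) : Prop :=
  ∃ Φ : TuringFunctional,
    ∀ g : ℕ →. Bool, IsPartialOracle g A → (pDom g).Infinite →
      Φ.PAgrees g B ∧ (Φ.PDomain g).Infinite

/-- `B ≤_ubfb A`: use-bounded-from-below reducibility. -/
def UbfbRed (B A : Set ℕ) : Prop :=
  ∃ Φ : TuringFunctional, Φ.FunEq A B ∧
    ∀ m : ℕ, ∀ᶠ n in Filter.atTop, ¬ Φ.QueriesAt A n m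

/-- `R(S) = {2^n · m : n ∈ S, m odd}`. -/
def Rmap (S : Set ℕ) : Set ℕ :=
  {x | ∃ n ∈ S, ∃ m : ℕ, Odd m ∧ x = 2 ^ n * m}

/-- `R̃(S) = {2^n + m : n ∈ S, m < 2^n}`. -/
def Rtilde (S : Set ℕ) : Set ℕ :=
  {x | ∃ n ∈ S, ∃ m : ℕ, m < 2 ^ n ∧ x = 2 ^ n + m}

/-- The Turing join `A ⊕ B`. -/
def turingJoin (A B : Set ℕ) : Set ℕ :=
  {x | (∃ n ∈ A, x = 2 * n) ∨ (∃ n ∈ B, x = 2 * n + 1)}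


/-! Auxiliary lemmas for the main theorem -/

def v2c (x : ℕ) : ℕ :=
  ((List.range (x+1)).map (fun n => if x % 2^n = 0 then n else 0)).foldr max 0

lemma foldr_max_le {l : List ℕ} {v : ℕ} (h : ∀ a ∈ l, a ≤ v) : l.foldr max 0 ≤ v := by
  induction l with
  | nil => simp
  | cons a l ih =>
    simp only [List.foldr_cons, max_le_iff]
    exact ⟨h a (by simp), ih fun b hb => h b (by simp [hb])⟩

lemma le_foldr_max {l : List ℕ} {a : ℕ} (h : a ∈ l) : a ≤ l.foldr max 0 := by
  induction l with
  | nil => simp at h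
  | cons b l ih =>
    rcases List.mem_cons.mp h with rfl | h
    · simp
    · exact le_trans (ih h) (by simp)

lemma v2c_eq {x : ℕ} (hx : x ≠ 0) : v2c x = x.factorization 2 := by
  apply le_antisymm
  · apply foldr_max_le
    intro a ha
    rcases List.mem_map.mp ha with ⟨n, _, rfl⟩
    split_ifs with h
    · exact (Nat.Prime.pow_dvd_iff_le_factorization Nat.prime_two hx).mp
        (Nat.dvd_of_mod_eq_zero h)
    · exact Nat.zero_le _
  · apply le_foldr_max
    apply List.mem_map.mpr
    refine ⟨x.factorization 2, ?_, ?_⟩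
    · have h1 : 2 ^ (x.factorization 2) ≤ x := Nat.ordProj_le 2 hx
      have h2 : x.factorization 2 < 2 ^ (x.factorization 2) := (x.factorization 2).lt_two_pow_self
      exact List.mem_range.mpr (by omega)
    · simp [Nat.mod_eq_zero_of_dvd (Nat.ordProj_dvd x 2)]

lemma fact2_pow_mul_odd (n m : ℕ) : ((2:ℕ)^n * (2*m+1)).factorization 2 = n := by
  have h1 : (2:ℕ)^n ≠ 0 := by positivity
  have h2 : (2:ℕ)*m+1 ≠ 0 := by omega
  rw [Nat.factorization_mul h1 h2]
  have e1 : ((2:ℕ)^n).factorization 2 = n := by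
    rw [Nat.Prime.factorization_pow Nat.prime_two]
    simp [Nat.Prime.factorization_self Nat.prime_two]
  have e2 : ((2:ℕ)*m+1).factorization 2 = 0 :=
    Nat.factorization_eq_zero_of_not_dvd (by omega)
  simp only [Finsupp.add_apply, e1, e2]; omega

lemma mem_Rmap_iff {S : Set ℕ} {x : ℕ} :
    x ∈ Rmap S ↔ x ≠ 0 ∧ x.factorization 2 ∈ S := by
  constructor
  · rintro ⟨n, hn, m, hm, rfl⟩
    rcases hm with ⟨k, rfl⟩
    have hk : k + k + 1 = 2*k+1 := by ring
    constructor
    · positivity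
    · rw [fact2_pow_mul_odd]; exact hn
  · rintro ⟨hx, h⟩
    refine ⟨x.factorization 2, h, ordCompl[2] x, ?_, ?_⟩
    · rw [Nat.odd_iff]
      have := Nat.not_dvd_ordCompl Nat.prime_two hx
      omega
    · exact (Nat.ordProj_mul_ordCompl_eq_self x 2).symm

lemma zero_not_mem_Rmap {S : Set ℕ} : 0 ∉ Rmap S := fun h => (mem_Rmap_iff.mp h).1 rfl

lemma pow_mul_odd_mem_Rmap {S : Set ℕ} {j m : ℕ} :
    (2:ℕ)^j * (2*m+1) ∈ Rmap S ↔ j ∈ S := by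
  rw [mem_Rmap_iff, fact2_pow_mul_odd]
  have : (2:ℕ)^j * (2*m+1) ≠ 0 := by positivity
  tauto

lemma pow_mul_odd_inj {j₁ m₁ j₂ m₂ : ℕ} (h : (2:ℕ)^j₁ * (2*m₁+1) = 2^j₂ * (2*m₂+1)) :
    j₁ = j₂ ∧ m₁ = m₂ := by
  have hj : j₁ = j₂ := by
    have := fact2_pow_mul_odd j₁ m₁
    rw [h, fact2_pow_mul_odd] at this
    omega
  subst hj
  have h2 : (2:ℕ)^j₁ ≠ 0 := by positivity
  have := Nat.eq_of_mul_eq_mul_left (Nat.pos_of_ne_zero h2) h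
  omega

def memb (m : ℕ) (L : List ℕ) : Bool := L.foldr (fun a r => (a == m) || r) false

lemma memb_iff {m : ℕ} {L : List ℕ} : memb m L = true ↔ m ∈ L := by
  induction L with
  | nil => simp [memb]
  | cons a L ih => simp [memb, List.foldr_cons] at ih ⊢; rw [ih]; aesop

def allOk (σ : List (ℕ × Bool)) : Bool :=
  σ.foldr (fun p r => ((p.1 == 0) == false || (p.2 == false)) && r) true

lemma allOk_iff {σ : List (ℕ × Bool)} : allOk σ = true ↔ ∀ p ∈ σ, p.1 = 0 → p.2 = false := by
  induction σ with
  | nil => simp [allOk]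
  | cons a σ ih => simp [allOk, List.foldr_cons] at ih ⊢; rw [ih]; tauto

lemma exists_not_mem_two {x : ℕ} (L₁ L₂ : List ℕ) (h₁ : L₁.length ≤ x) (h₂ : L₂.length ≤ x) :
    ∃ m < 2*x+1, m ∉ L₁ ∧ m ∉ L₂ := by
  by_contra h
  push_neg at h
  have hsub : Finset.range (2*x+1) ⊆ L₁.toFinset ∪ L₂.toFinset := by
    intro m hm
    rcases Finset.mem_range.mp hm with hm'
    by_cases h1 : m ∈ L₁
    · exact Finset.mem_union_left _ (List.mem_toFinset.mpr h1)
    · exact Finset.mem_union_right _ (List.mem_toFinset.mpr (h m ‹_› h1))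
  have := Finset.card_le_card hsub
  have h3 := Finset.card_union_le L₁.toFinset L₂.toFinset
  have h4 := L₁.toFinset_card_le
  have h5 := L₂.toFinset_card_le
  simp [Finset.card_range] at this
  omega

/-! Primrec lemmas -/

lemma pow2_primrec : Primrec (fun n : ℕ => 2 ^ n) :=
  (Primrec₂.unpaired.mp (Primrec.nat_iff.mpr Nat.Primrec.pow)).comp (Primrec.const 2) Primrec.id

lemma v2c_primrec : Primrec v2c := by
  have hmap : Primrec (fun x : ℕ => (List.range (x+1)).map
      (fun n => if x % 2^n = 0 then n else 0)) := by
    apply Primrec.list_map (Primrec.list_range.comp Primrec.succ)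
    have h : Primrec fun p : ℕ × ℕ => if p.1 % 2 ^ p.2 = 0 then p.2 else 0 :=
      Primrec.ite
        (Primrec.eq.comp (Primrec.nat_mod.comp Primrec.fst (pow2_primrec.comp Primrec.snd))
          (Primrec.const 0))
        Primrec.snd (Primrec.const 0)
    exact h.to₂
  have := Primrec.list_foldr hmap (Primrec.const 0)
    (Primrec.to₂ (Primrec.nat_max.comp (Primrec.fst.comp Primrec.snd)
      (Primrec.snd.comp Primrec.snd)))
  exact this.of_eq fun x => rfl

lemma memb_primrec : Primrec₂ memb := by
  have := Primrec.list_foldr (Primrec.snd : Primrec fun p : ℕ × List ℕ => p.2)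
    (Primrec.const false)
    (Primrec.to₂ ((Primrec.dom_bool₂ (· || ·)).comp
      (Primrec.beq.comp (Primrec.fst.comp Primrec.snd) (Primrec.fst.comp Primrec.fst))
      (Primrec.snd.comp Primrec.snd)))
  exact Primrec.to₂ (this.of_eq fun p => rfl)

lemma allOk_primrec : Primrec allOk := by
  have := Primrec.list_foldr (Primrec.id : Primrec fun l : List (ℕ × Bool) => l)
    (Primrec.const true)
    (Primrec.to₂ ((Primrec.dom_bool₂ (· && ·)).comp
      ((Primrec.dom_bool₂ (· || ·)).comp
        (Primrec.beq.comp
          (Primrec.beq.comp (Primrec.fst.comp (Primrec.fst.comp Primrec.snd))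
            (Primrec.const 0))
          (Primrec.const false))
        (Primrec.beq.comp (Primrec.snd.comp (Primrec.fst.comp Primrec.snd))
          (Primrec.const false)))
      (Primrec.snd.comp Primrec.snd)))
  exact this.of_eq fun l => rfl

/-! Core translation functions -/

def fwdCore (z : ℕ × List ℕ × Option (List (ℕ × Bool) × ℕ × Bool)) :
    Option (List (ℕ × Bool) × ℕ × Bool) :=
  bif z.1 == 0 then some ([], 0, false) else
  z.2.2.bind fun q =>
    bif (v2c z.1 == q.2.1) && decide (z.2.1.length ≤ z.1) then
      some (q.1.flatMap fun p => (List.range (2*z.1+1)).filterMap fun m =>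
        bif memb m z.2.1 then none else some (2^p.1 * (2*m+1), p.2), z.1, q.2.2)
    else none

lemma fwdCore_primrec : Primrec fwdCore := by
  apply Primrec.cond (Primrec.beq.comp Primrec.fst (Primrec.const 0))
    (Primrec.const (some ([], 0, false)))
  apply Primrec.option_bind (Primrec.snd.comp Primrec.snd)
  -- now over β = α × (List (ℕ × Bool) × ℕ × Bool)
  have hC : Primrec fun w : (ℕ × List ℕ × Option (List (ℕ × Bool) × ℕ × Bool)) ×
      (List (ℕ × Bool) × ℕ × Bool) =>
      (v2c w.1.1 == w.2.2.1) && decide (w.1.2.1.length ≤ w.1.1) :=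
    (Primrec.dom_bool₂ (· && ·)).comp
      (Primrec.beq.comp (v2c_primrec.comp (Primrec.fst.comp Primrec.fst))
        (Primrec.fst.comp (Primrec.snd.comp Primrec.snd)))
      (Primrec.nat_le.comp
        (Primrec.list_length.comp (Primrec.fst.comp (Primrec.snd.comp Primrec.fst)))
        (Primrec.fst.comp Primrec.fst)).decide
  have hK : Primrec fun d : (((ℕ × List ℕ × Option (List (ℕ × Bool) × ℕ × Bool)) ×
      (List (ℕ × Bool) × ℕ × Bool)) × (ℕ × Bool)) × ℕ =>
      bif memb d.2 d.1.1.1.2.1 then none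
      else some (2 ^ d.1.2.1 * (2 * d.2 + 1), d.1.2.2) := by
    apply Primrec.cond
      (memb_primrec.comp Primrec.snd
        (Primrec.fst.comp (Primrec.snd.comp (Primrec.fst.comp (Primrec.fst.comp Primrec.fst)))))
      (Primrec.const none)
    exact Primrec.option_some.comp (Primrec.pair
      (Primrec.nat_mul.comp
        (pow2_primrec.comp (Primrec.fst.comp (Primrec.snd.comp Primrec.fst)))
        (Primrec.succ.comp (Primrec.nat_double.comp Primrec.snd)))
      (Primrec.snd.comp (Primrec.snd.comp Primrec.fst)))
  have hInner : Primrec fun c : ((ℕ × List ℕ × Option (List (ℕ × Bool) × ℕ × Bool)) ×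
      (List (ℕ × Bool) × ℕ × Bool)) × (ℕ × Bool) =>
      (List.range (2 * c.1.1.1 + 1)).filterMap fun m =>
        bif memb m c.1.1.2.1 then none
        else some (2 ^ c.2.1 * (2 * m + 1), c.2.2) := by
    apply Primrec.listFilterMap
      (Primrec.list_range.comp (Primrec.succ.comp
        (Primrec.nat_double.comp (Primrec.fst.comp (Primrec.fst.comp Primrec.fst)))))
    exact hK.to₂
  have hT : Primrec fun w : (ℕ × List ℕ × Option (List (ℕ × Bool) × ℕ × Bool)) ×
      (List (ℕ × Bool) × ℕ × Bool) =>
      (some (w.2.1.flatMap fun p => (List.range (2*w.1.1+1)).filterMap fun m =>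
        bif memb m w.1.2.1 then none else some (2^p.1 * (2*m+1), p.2), w.1.1, w.2.2.2) :
        Option (List (ℕ × Bool) × ℕ × Bool)) := by
    apply Primrec.option_some.comp
    apply Primrec.pair
    · exact Primrec.list_flatMap (Primrec.fst.comp Primrec.snd) hInner.to₂
    · exact Primrec.pair (Primrec.fst.comp Primrec.fst)
        (Primrec.snd.comp (Primrec.snd.comp Primrec.snd))
  have := Primrec.cond hC hT (Primrec.const none)
  exact this.to₂

def bwdCore (o : Option (List (ℕ × Bool) × ℕ × Bool)) : Option (List (ℕ × Bool) × ℕ × Bool) :=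
  o.bind fun q =>
    bif ((q.2.1 == 0) == false) && (2 ^ v2c q.2.1 == q.2.1) && allOk q.1 then
      some (q.1.filterMap fun p => bif p.1 == 0 then none else some (v2c p.1, p.2),
        v2c q.2.1, q.2.2)
    else none

lemma bwdCore_primrec : Primrec bwdCore := by
  apply Primrec.option_bind Primrec.id
  have hC : Primrec fun w : Option (List (ℕ × Bool) × ℕ × Bool) ×
      (List (ℕ × Bool) × ℕ × Bool) =>
      ((w.2.2.1 == 0) == false) && (2 ^ v2c w.2.2.1 == w.2.2.1) && allOk w.2.1 :=
    (Primrec.dom_bool₂ (· && ·)).comp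
      ((Primrec.dom_bool₂ (· && ·)).comp
        (Primrec.beq.comp
          (Primrec.beq.comp (Primrec.fst.comp (Primrec.snd.comp Primrec.snd))
            (Primrec.const 0))
          (Primrec.const false))
        (Primrec.beq.comp
          (pow2_primrec.comp (v2c_primrec.comp (Primrec.fst.comp
            (Primrec.snd.comp Primrec.snd))))
          (Primrec.fst.comp (Primrec.snd.comp Primrec.snd))))
      (allOk_primrec.comp (Primrec.fst.comp Primrec.snd))
  have hK : Primrec fun d : (Option (List (ℕ × Bool) × ℕ × Bool) ×
      (List (ℕ × Bool) × ℕ × Bool)) × (ℕ × Bool) =>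
      bif d.2.1 == 0 then none else some (v2c d.2.1, d.2.2) := by
    apply Primrec.cond (Primrec.beq.comp (Primrec.fst.comp Primrec.snd) (Primrec.const 0))
      (Primrec.const none)
    exact Primrec.option_some.comp
      (Primrec.pair (v2c_primrec.comp (Primrec.fst.comp Primrec.snd))
        (Primrec.snd.comp Primrec.snd))
  have hT : Primrec fun w : Option (List (ℕ × Bool) × ℕ × Bool) ×
      (List (ℕ × Bool) × ℕ × Bool) =>
      (some (w.2.1.filterMap fun p => bif p.1 == 0 then none else some (v2c p.1, p.2),
        v2c w.2.2.1, w.2.2.2) : Option (List (ℕ × Bool) × ℕ × Bool)) := by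
    apply Primrec.option_some.comp
    apply Primrec.pair
    · exact Primrec.listFilterMap (Primrec.fst.comp Primrec.snd) hK.to₂
    · exact Primrec.pair (v2c_primrec.comp (Primrec.fst.comp (Primrec.snd.comp Primrec.snd)))
        (Primrec.snd.comp (Primrec.snd.comp Primrec.snd))
  exact (Primrec.cond hC hT (Primrec.const none)).to₂

/-! Spec lemmas -/

def fwdSig (x : ℕ) (L : List ℕ) (σ : List (ℕ × Bool)) : List (ℕ × Bool) :=
  σ.flatMap fun p => (List.range (2*x+1)).filterMap fun m =>
    bif memb m L then none else some (2^p.1 * (2*m+1), p.2)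

lemma mem_fwdSig {x : ℕ} {L : List ℕ} {σ : List (ℕ × Bool)} {q : ℕ × Bool} :
    q ∈ fwdSig x L σ ↔ ∃ p ∈ σ, ∃ m, m < 2*x+1 ∧ m ∉ L ∧ q = (2^p.1 * (2*m+1), p.2) := by
  simp only [fwdSig, List.mem_flatMap, List.mem_filterMap, List.mem_range]
  constructor
  · rintro ⟨p, hp, m, hm, hf⟩
    rcases hmemb : memb m L with _ | _
    · rw [hmemb] at hf; simp only [cond_false, Option.some.injEq] at hf
      exact ⟨p, hp, m, hm, fun hmem => by simp [memb_iff.mpr hmem] at hmemb, hf.symm⟩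
    · rw [hmemb] at hf; simp at hf
  · rintro ⟨p, hp, m, hm, hnm, rfl⟩
    refine ⟨p, hp, m, hm, ?_⟩
    have : memb m L = false := by
      rcases h : memb m L with _ | _
      · rfl
      · exact absurd (memb_iff.mp h) hnm
    rw [this]; rfl

lemma fwdCore_zero (L : List ℕ) (o : Option (List (ℕ × Bool) × ℕ × Bool)) :
    fwdCore (0, L, o) = some ([], 0, false) := rfl

lemma fwdCore_eq_iff {x : ℕ} (hx : x ≠ 0) {L : List ℕ}
    {o : Option (List (ℕ × Bool) × ℕ × Bool)} {y : List (ℕ × Bool) × ℕ × Bool} :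
    fwdCore (x, L, o) = some y ↔
      ∃ σ b, o = some (σ, v2c x, b) ∧ L.length ≤ x ∧ y = (fwdSig x L σ, x, b) := by
  have hxx : (x == 0) = false := by simp [hx]
  rcases o with _ | ⟨σ, n, b⟩
  · simp [fwdCore, hxx]
  · have hrfl : fwdCore (x, L, some (σ, n, b)) = (bif (x == 0) then some ([], 0, false)
        else (bif (v2c x == n) && decide (L.length ≤ x) then
          some (fwdSig x L σ, x, b) else none)) := rfl
    rw [hrfl, hxx]
    simp only [cond_false]
    rcases h1 : ((v2c x == n) && decide (L.length ≤ x)) with _ | _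
    · constructor
      · rintro ⟨⟩
      · rintro ⟨σ', b', heq, hlen, -⟩
        simp only [Option.some.injEq, Prod.mk.injEq] at heq
        obtain ⟨-, h4, -⟩ := heq
        rcases Bool.and_eq_false_iff.mp h1 with h | h
        · rw [beq_eq_false_iff_ne] at h; exact absurd h4.symm h
        · rw [decide_eq_false_iff_not] at h; exact absurd hlen h
    · simp only [Bool.and_eq_true, beq_iff_eq, decide_eq_true_eq] at h1
      obtain ⟨hn, hlen⟩ := h1
      constructor
      · rintro ⟨⟩
        exact ⟨σ, b, by rw [hn], hlen, rfl⟩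
      · rintro ⟨σ', b', heq, -, rfl⟩
        simp only [Option.some.injEq, Prod.mk.injEq] at heq
        obtain ⟨g1, -, g3⟩ := heq
        rw [g1, g3]
        rfl

def bwdSig (σ : List (ℕ × Bool)) : List (ℕ × Bool) :=
  σ.filterMap fun p => bif p.1 == 0 then none else some (v2c p.1, p.2)

lemma mem_bwdSig {σ : List (ℕ × Bool)} {q : ℕ × Bool} :
    q ∈ bwdSig σ ↔ ∃ p ∈ σ, p.1 ≠ 0 ∧ q = (v2c p.1, p.2) := by
  simp only [bwdSig, List.mem_filterMap]
  constructor
  · rintro ⟨p, hp, hf⟩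
    rcases h : (p.1 == 0) with _ | _
    · rw [h] at hf; simp only [cond_false, Option.some.injEq] at hf
      exact ⟨p, hp, by simpa using h, hf.symm⟩
    · rw [h] at hf; simp at hf
  · rintro ⟨p, hp, hne, rfl⟩
    refine ⟨p, hp, ?_⟩
    have : (p.1 == 0) = false := by simp [hne]
    rw [this]; rfl

lemma bwdCore_eq_iff {o : Option (List (ℕ × Bool) × ℕ × Bool)}
    {y : List (ℕ × Bool) × ℕ × Bool} :
    bwdCore o = some y ↔
      ∃ σ x b, o = some (σ, x, b) ∧ x ≠ 0 ∧ 2 ^ v2c x = x ∧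
        (∀ p ∈ σ, p.1 = 0 → p.2 = false) ∧ y = (bwdSig σ, v2c x, b) := by
  rcases o with _ | ⟨σ, x, b⟩
  · simp [bwdCore]
  · show (bif ((x == 0) == false) && (2 ^ v2c x == x) && allOk σ then
        some (bwdSig σ, v2c x, b) else none) = some y ↔ _
    rcases hcond : (((x == 0) == false) && (2 ^ v2c x == x) && allOk σ) with _ | _
    · constructor
      · rintro ⟨⟩
      · rintro ⟨σ', x', b', heq, hx, hpow, hall, -⟩
        simp only [Option.some.injEq, Prod.mk.injEq] at heq
        obtain ⟨e1, e2, e3⟩ := heq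
        subst e1; subst e2; subst e3
        have : (((x == 0) == false) && (2 ^ v2c x == x) && allOk σ) = true := by
          simp only [Bool.and_eq_true, beq_iff_eq]
          exact ⟨⟨by simp [hx], hpow⟩, allOk_iff.mpr hall⟩
        rw [hcond] at this; exact absurd this (by simp)
    · simp only [Bool.and_eq_true, beq_iff_eq] at hcond
      obtain ⟨⟨h1, h2⟩, h3⟩ := hcond
      have hx : x ≠ 0 := by
        intro h; subst h; simp at h1
      simp only [cond_true, Option.some.injEq]
      constructor
      · rintro rfl
        exact ⟨σ, x, b, rfl, hx, h2, allOk_iff.mp h3, rfl⟩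
      · rintro ⟨σ', x', b', heq, -, -, -, rfl⟩
        simp only [Option.some.injEq, Prod.mk.injEq] at heq
        obtain ⟨e1, e2, e3⟩ := heq
        rw [e1, e2, e3]

lemma v2c_pow (n : ℕ) : v2c (2^n) = n := by
  rw [v2c_eq (by positivity)]
  simpa using fact2_pow_mul_odd n 0

lemma pow2_mem_Rmap_iff {S : Set ℕ} {n : ℕ} : (2:ℕ)^n ∈ Rmap S ↔ n ∈ S := by
  have := pow_mul_odd_mem_Rmap (S := S) (j := n) (m := 0)
  simpa using this

lemma turingRed_of_cofinRed {A B : Set ℕ} (h : CofinRed (Rmap B) (Rmap A)) :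
    TuringRed B A := by
  obtain ⟨Φ, hFun, -⟩ := h
  refine ⟨⟨fun k => bwdCore (Φ.axs k), bwdCore_primrec.to_comp.comp Φ.axs_computable, ?_⟩,
    ?_, ?_⟩
  · -- consistency
    intro k₁ k₂ σ₁' σ₂' n b₁ b₂ h1 h2 hcomp
    obtain ⟨σ₁, x₁, c₁, ha₁, hx₁, hp₁, hall₁, hy₁⟩ := bwdCore_eq_iff.mp h1
    obtain ⟨σ₂, x₂, c₂, ha₂, hx₂, hp₂, hall₂, hy₂⟩ := bwdCore_eq_iff.mp h2
    simp only [Prod.mk.injEq] at hy₁ hy₂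
    obtain ⟨hs₁, hn₁, hb₁⟩ := hy₁
    obtain ⟨hs₂, hn₂, hb₂⟩ := hy₂
    have hxeq : x₁ = x₂ := by rw [← hp₁, ← hp₂, ← hn₁, ← hn₂]
    rw [hb₁, hb₂]
    have hcompat : FinInfo.Compatible σ₁ σ₂ := by
      intro p hp q hq hpq
      by_cases hp0 : p.1 = 0
      · rw [hall₁ p hp hp0, hall₂ q hq (by rw [← hpq]; exact hp0)]
      · have hq0 : q.1 ≠ 0 := by rw [← hpq]; exact hp0
        have m1 : (v2c p.1, p.2) ∈ σ₁' := by
          rw [hs₁]; exact mem_bwdSig.mpr ⟨p, hp, hp0, rfl⟩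
        have m2 : (v2c q.1, q.2) ∈ σ₂' := by
          rw [hs₂]; exact mem_bwdSig.mpr ⟨q, hq, hq0, rfl⟩
        exact hcomp (v2c p.1, p.2) m1 (v2c q.1, q.2) m2 (by simp [hpq])
    rw [hxeq] at ha₁
    exact Φ.consistent k₁ k₂ σ₁ σ₂ x₂ c₁ c₂ ha₁ ha₂ hcompat
  · -- totality on A
    intro n
    obtain ⟨b, k, σ, hax, hagr⟩ := hFun.1 (2^n)
    refine ⟨b, k, bwdSig σ, ?_, ?_⟩
    · apply bwdCore_eq_iff.mpr
      refine ⟨σ, 2^n, b, hax, by positivity, by rw [v2c_pow], ?_, by rw [v2c_pow]⟩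
      intro p hp hp0
      have := hagr p hp
      rw [hp0] at this
      rcases hb2 : p.2 with _ | _
      · rfl
      · exact absurd (this.mp hb2) zero_not_mem_Rmap
    · intro q hq
      obtain ⟨p, hp, hp0, rfl⟩ := mem_bwdSig.mp hq
      have := hagr p hp
      rw [this, mem_Rmap_iff, v2c_eq hp0]
      tauto
  · -- correctness
    intro n b hb
    obtain ⟨k, σ', hax', hagr'⟩ := hb
    obtain ⟨σ, x, c, ha, hx, hp, hall, hy⟩ := bwdCore_eq_iff.mp hax'
    simp only [Prod.mk.injEq] at hy
    obtain ⟨hs, hn, hbc⟩ := hy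
    have hagrA : AgreesSet σ (Rmap A) := by
      intro p hp'
      by_cases hp0 : p.1 = 0
      · rw [hall p hp' hp0, hp0]
        simp only [Bool.false_eq_true, false_iff]
        exact zero_not_mem_Rmap
      · have : (v2c p.1, p.2) ∈ σ' := by
          rw [hs]; exact mem_bwdSig.mpr ⟨p, hp', hp0, rfl⟩
        have h2 := hagr' _ this
        simp only at h2
        rw [h2, mem_Rmap_iff, v2c_eq hp0]
        tauto
    have hH : Φ.HaltsT (Rmap A) x c := ⟨k, σ, ha, hagrA⟩
    have := hFun.2 x c hH
    rw [hbc, this, ← hp, ← hn, pow2_mem_Rmap_iff]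

lemma fwdSig_spec_to_agrees {A : Set ℕ} {x : ℕ} {L : List ℕ} {σ : List (ℕ × Bool)}
    (hlen : L.length ≤ x)
    (hval : ∀ q ∈ fwdSig x L σ, (q.2 = true ↔ q.1 ∈ Rmap A)) :
    AgreesSet σ A := by
  intro p hp
  obtain ⟨m, hm, hmL, -⟩ := exists_not_mem_two L L hlen hlen
  have hmem : (2^p.1 * (2*m+1), p.2) ∈ fwdSig x L σ :=
    mem_fwdSig.mpr ⟨p, hp, m, hm, hmL, rfl⟩
  have := hval _ hmem
  simpa [pow_mul_odd_mem_Rmap] using this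

lemma fwdSig_agrees_Rmap {A : Set ℕ} {x : ℕ} {L : List ℕ} {σ : List (ℕ × Bool)}
    (hagr : AgreesSet σ A) : AgreesSet (fwdSig x L σ) (Rmap A) := by
  intro q hq
  obtain ⟨p, hp, m, -, -, rfl⟩ := mem_fwdSig.mp hq
  simpa [pow_mul_odd_mem_Rmap] using hagr p hp

set_option maxHeartbeats 1000000 in
lemma cofinRed_of_turingRed {A B : Set ℕ} (h : TuringRed B A) :
    CofinRed (Rmap B) (Rmap A) := by
  classical
  obtain ⟨Ψ, hTot, hCor⟩ := h
  set F : ℕ → Option (FinInfo × ℕ × Bool) := fun t =>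
    fwdCore (t.unpair.1.unpair.1, Denumerable.ofNat (List ℕ) t.unpair.1.unpair.2,
      Ψ.axs t.unpair.2) with hF
  have hFcomp : Computable F := by
    apply fwdCore_primrec.to_comp.comp
    apply Computable.pair
    · exact (Primrec.fst.comp (Primrec.unpair.comp
        (Primrec.fst.comp Primrec.unpair))).to_comp
    · apply Computable.pair
      · exact ((Primrec.ofNat (List ℕ)).comp (Primrec.snd.comp (Primrec.unpair.comp
          (Primrec.fst.comp Primrec.unpair)))).to_comp
      · exact Ψ.axs_computable.comp (Primrec.snd.comp Primrec.unpair).to_comp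
  -- key decoding lemma
  have hdec : ∀ {t σ' xx b}, F t = some (σ', xx, b) → xx ≠ 0 →
      ∃ σ c, Ψ.axs t.unpair.2 = some (σ, v2c xx, c) ∧
        (Denumerable.ofNat (List ℕ) t.unpair.1.unpair.2).length ≤ xx ∧
        σ' = fwdSig xx (Denumerable.ofNat (List ℕ) t.unpair.1.unpair.2) σ ∧ b = c := by
    intro t σ' xx b ht hxx
    by_cases hx0 : t.unpair.1.unpair.1 = 0
    · rw [hF] at ht
      simp only [hx0, fwdCore_zero] at ht
      simp only [Option.some.injEq, Prod.mk.injEq] at ht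
      exact absurd ht.2.1.symm hxx
    · rw [hF] at ht
      obtain ⟨σ, c, ha, hlen, hy⟩ := (fwdCore_eq_iff hx0).mp ht
      simp only [Prod.mk.injEq] at hy
      obtain ⟨hs, hxeq, hbc⟩ := hy
      rw [hxeq]
      exact ⟨σ, c, ha, hlen, hs, hbc⟩
  have hdec0 : ∀ {t σ' xx b}, F t = some (σ', xx, b) → t.unpair.1.unpair.1 = 0 →
      σ' = [] ∧ xx = 0 ∧ b = false := by
    intro t σ' xx b ht hx0
    rw [hF] at ht
    simp only [hx0, fwdCore_zero] at ht
    simp only [Option.some.injEq, Prod.mk.injEq] at ht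
    exact ⟨ht.1.symm, ht.2.1.symm, ht.2.2.symm⟩
  -- the functional
  refine ⟨⟨F, hFcomp, ?_⟩, ⟨?_, ?_⟩, ?_⟩
  · -- consistency
    intro k₁ k₂ σ₁' σ₂' xx b₁ b₂ h1 h2 hcomp
    by_cases hxx : xx = 0
    · by_cases hx1 : k₁.unpair.1.unpair.1 = 0
      · by_cases hx2 : k₂.unpair.1.unpair.1 = 0
        · rw [(hdec0 h1 hx1).2.2, (hdec0 h2 hx2).2.2]
        · exfalso
          rw [hF] at h2
          obtain ⟨σ, c, ha, hlen, hy⟩ := (fwdCore_eq_iff hx2).mp h2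
          simp only [Prod.mk.injEq] at hy
          exact hx2 (hy.2.1.symm.trans hxx)
      · exfalso
        rw [hF] at h1
        obtain ⟨σ, c, ha, hlen, hy⟩ := (fwdCore_eq_iff hx1).mp h1
        simp only [Prod.mk.injEq] at hy
        exact hx1 (hy.2.1.symm.trans hxx)
    · obtain ⟨σ₁, c₁, ha₁, hlen₁, hs₁, hb₁⟩ := hdec h1 hxx
      obtain ⟨σ₂, c₂, ha₂, hlen₂, hs₂, hb₂⟩ := hdec h2 hxx
      rw [hb₁, hb₂]
      apply Ψ.consistent _ _ σ₁ σ₂ (v2c xx) c₁ c₂ ha₁ ha₂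
      intro p hp q hq hpq
      obtain ⟨m, hm, hm1, hm2⟩ := exists_not_mem_two _ _ hlen₁ hlen₂
      have mm1 : (2^p.1 * (2*m+1), p.2) ∈ σ₁' := by
        rw [hs₁]; exact mem_fwdSig.mpr ⟨p, hp, m, hm, hm1, rfl⟩
      have mm2 : (2^q.1 * (2*m+1), q.2) ∈ σ₂' := by
        rw [hs₂]; exact mem_fwdSig.mpr ⟨q, hq, m, hm, hm2, rfl⟩
      exact hcomp (2^p.1 * (2*m+1), p.2) mm1 (2^q.1 * (2*m+1), q.2) mm2 (by simp [hpq])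
  · -- totality on Rmap A
    intro x
    by_cases hx : x = 0
    · refine ⟨false, Nat.pair (Nat.pair 0 0) 0, [], ?_, ?_⟩
      · show F (Nat.pair (Nat.pair 0 0) 0) = some ([], x, false)
        simp only [hF, Nat.unpair_pair, hx]
        exact fwdCore_zero _ _
      · intro p hp; simp at hp
    · obtain ⟨b, k, σ, hax, hagr⟩ := hTot (x.factorization 2)
      refine ⟨b, Nat.pair (Nat.pair x (Encodable.encode ([] : List ℕ))) k,
        fwdSig x [] σ, ?_, fwdSig_agrees_Rmap hagr⟩
      show F (Nat.pair (Nat.pair x (Encodable.encode ([] : List ℕ))) k) =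
        some (fwdSig x [] σ, x, b)
      simp only [hF, Nat.unpair_pair, Denumerable.ofNat_encode]
      exact (fwdCore_eq_iff hx).mpr ⟨σ, b, by rw [v2c_eq hx]; exact hax, by simp, rfl⟩
  · -- correctness on Rmap A
    intro x b hb
    obtain ⟨t, σ', hax', hagr'⟩ := hb
    by_cases hx : x = 0
    · have := hdec0 hax' ?_
      · rw [this.2.2, hx]
        simp only [Bool.false_eq_true, false_iff]
        exact zero_not_mem_Rmap
      · by_contra hx0
        have hax2 : F t = some (σ', x, b) := hax'
        rw [hF] at hax2
        obtain ⟨σ, c, ha, hlen, hy⟩ := (fwdCore_eq_iff hx0).mp hax2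
        simp only [Prod.mk.injEq] at hy
        exact hx0 (hy.2.1.symm.trans hx)
    · obtain ⟨σ, c, ha, hlen, hs, hbc⟩ := hdec hax' hx
      have hagrA : AgreesSet σ A := by
        apply fwdSig_spec_to_agrees hlen
        intro q hq
        exact hagr' q (by rw [hs] at hagr' ⊢; exact hq)
      have := hCor (v2c x) c ⟨t.unpair.2, σ, ha, hagrA⟩
      rw [hbc, this, mem_Rmap_iff, v2c_eq hx]
      tauto
  · -- cofinite robustness
    intro g hg hgc
    constructor
    · -- PAgrees
      intro x b hb
      obtain ⟨t, σ', hax', hpart⟩ := hb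
      by_cases hx0 : t.unpair.1.unpair.1 = 0
      · have h0 := hdec0 hax' hx0
        rw [h0.2.2, h0.2.1]
        simp only [Bool.false_eq_true, false_iff]
        exact zero_not_mem_Rmap
      · have hax2 : F t = some (σ', x, b) := hax'
        rw [hF] at hax2
        obtain ⟨σ, c, ha, hlen, hy⟩ := (fwdCore_eq_iff hx0).mp hax2
        simp only [Prod.mk.injEq] at hy
        obtain ⟨hs, hxeq, hbc⟩ := hy
        have hagrA : AgreesSet σ A := by
          apply fwdSig_spec_to_agrees hlen
          intro q hq
          exact hg q.1 q.2 (hpart q (by rw [hs]; exact hq))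
        have hc := hCor (v2c t.unpair.1.unpair.1) c ⟨t.unpair.2, σ, ha, hagrA⟩
        rw [hbc, hxeq, hc, mem_Rmap_iff, v2c_eq hx0]
        exact ⟨fun h => ⟨hx0, h⟩, fun h => h.2⟩
    · -- cofinite domain
      apply Set.Finite.subset (Set.finite_Iic hgc.toFinset.card)
      intro x hxc
      by_contra hgt
      simp only [Set.mem_Iic, not_le] at hgt
      apply hxc
      have hx : x ≠ 0 := by omega
      obtain ⟨b, k, σ, hax, hagr⟩ := hTot (x.factorization 2)
      set L : List ℕ := (List.range (2*x+1)).filter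
        (fun m => decide (∃ p ∈ σ, ¬(g (2^p.1 * (2*m+1))).Dom)) with hL
      have hnodup : L.Nodup := List.nodup_range.filter _
      have hcard : L.toFinset.card ≤ hgc.toFinset.card := by
        apply Finset.card_le_card_of_injOn (fun m =>
          if h : ∃ p ∈ σ, ¬(g (2^p.1 * (2*m+1))).Dom then 2^(h.choose.1) * (2*m+1) else 0)
        · intro m hm
          simp only [Finset.mem_coe, List.mem_toFinset, hL, List.mem_filter] at hm
          have hbad := of_decide_eq_true hm.2
          beta_reduce
          rw [dif_pos hbad]
          rw [Finset.mem_coe, Set.Finite.mem_toFinset]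
          exact hbad.choose_spec.2
        · intro m₁ hm₁ m₂ hm₂ heq
          simp only [Finset.mem_coe, List.mem_toFinset, hL, List.mem_filter] at hm₁ hm₂
          have h₁ := of_decide_eq_true hm₁.2
          have h₂ := of_decide_eq_true hm₂.2
          have heq' : 2^(h₁.choose.1) * (2*m₁+1) = 2^(h₂.choose.1) * (2*m₂+1) := by
            simpa only [dif_pos h₁, dif_pos h₂] using heq
          exact (pow_mul_odd_inj heq').2
      have hlenL : L.length ≤ x := by
        have := List.toFinset_card_of_nodup hnodup
        omega
      refine ⟨b, Nat.pair (Nat.pair x (Encodable.encode L)) k, fwdSig x L σ, ?_, ?_⟩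
      · show F (Nat.pair (Nat.pair x (Encodable.encode L)) k) = some (fwdSig x L σ, x, b)
        simp only [hF, Nat.unpair_pair, Denumerable.ofNat_encode]
        exact (fwdCore_eq_iff hx).mpr ⟨σ, b, by rw [v2c_eq hx]; exact hax, hlenL, rfl⟩
      · intro q hq
        obtain ⟨p, hp, m, hm, hmL, rfl⟩ := mem_fwdSig.mp hq
        have hgood : ∀ p' ∈ σ, (g (2^p'.1 * (2*m+1))).Dom := by
          by_contra hbad
          push_neg at hbad
          apply hmL
          rw [hL, List.mem_filter]
          refine ⟨List.mem_range.mpr hm, decide_eq_true ?_⟩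
          obtain ⟨p', hp', hnd⟩ := hbad
          exact ⟨p', hp', hnd⟩
        have hdom := hgood p hp
        have hval := hg _ _ (Part.get_mem hdom)
        have hbitiff : p.2 = true ↔ (2^p.1 * (2*m+1)) ∈ Rmap A := by
          rw [pow_mul_odd_mem_Rmap]; exact hagr p hp
        have hget : (g (2^p.1 * (2*m+1))).get hdom = p.2 :=
          Bool.eq_iff_iff.mpr (hval.trans hbitiff.symm)
        show p.2 ∈ g (2^p.1 * (2*m+1))
        rw [← hget]
        exact Part.get_mem hdom

theorem turing_red_iff_cofinite_red_Rmap (A B : Set ℕ) :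
    TuringRed B A ↔ CofinRed (Rmap B) (Rmap A) :=
  ⟨cofinRed_of_turingRed, turingRed_of_cofinRed⟩
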